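/- Every non-transitive tournament on 4 vertices admits a homomorphism to QR_7. -/
import Mathlib

def qr7 (i j : ZMod 7) : Prop := j - i = 1 ∨ j - i = 2 ∨ j - i = 4

lemma helper (T : Fin 4 → Fin 4 → Prop) (a b c d : Fin 4)
    (cov : ∀ v, v = a ∨ v = b ∨ v = c ∨ v = d)
    (hirr : ∀ i, ¬ T i i)
    (nba : ¬ T b a) (ncb : ¬ T c b) (nac : ¬ T a c)
    (neba : ¬ (b = a)) (neca : ¬ (c = a)) (necb : ¬ (c = b))
    (neda : ¬ (d = a)) (nedb : ¬ (d = b)) (nedc : ¬ (d = c))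
    (va vb vc vd : ZMod 7)
    (e1 : qr7 va vb) (e2 : qr7 vb vc) (e3 : qr7 vc va)
    (p1 : (¬ T a d ∧ qr7 vd va) ∨ (¬ T d a ∧ qr7 va vd))
    (p2 : (¬ T b d ∧ qr7 vd vb) ∨ (¬ T d b ∧ qr7 vb vd))
    (p3 : (¬ T c d ∧ qr7 vd vc) ∨ (¬ T d c ∧ qr7 vc vd)) :
    ∃ φ : Fin 4 → ZMod 7, ∀ x y, T x y → qr7 (φ x) (φ y) := by
  refine ⟨fun v => if v = a then va else if v = b then vb else if v = c then vc else vd, ?_⟩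
  intro x y hxy
  obtain ⟨n1, q1⟩ | ⟨n1, q1⟩ := p1 <;> obtain ⟨n2, q2⟩ | ⟨n2, q2⟩ := p2 <;>
    obtain ⟨n3, q3⟩ | ⟨n3, q3⟩ := p3 <;>
    rcases cov x with rfl | rfl | rfl | rfl <;> rcases cov y with rfl | rfl | rfl | rfl <;>
    first
      | exact absurd hxy (hirr _)
      | exact absurd hxy nba
      | exact absurd hxy ncb
      | exact absurd hxy nac
      | exact absurd hxy n1
      | exact absurd hxy n2
      | exact absurd hxy n3
      | (simp only [neba, neca, necb, neda, nedb, nedc, if_pos, if_neg, ite_true, ite_false,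
          if_true, if_false, eq_self_iff_true, not_false_iff]; assumption)

theorem nontransitive_T4_to_qr7 (T : Fin 4 → Fin 4 → Prop)
    (hirr : ∀ i, ¬ T i i)
    (htour : ∀ i j : Fin 4, i ≠ j → (T i j ↔ ¬ T j i))
    (hnontrans : ¬ ∀ a b c, T a b → T b c → T a c) :
    ∃ φ : Fin 4 → ZMod 7, ∀ a b, T a b → qr7 (φ a) (φ b) := by
  push_neg at hnontrans
  obtain ⟨a, b, c, hab, hbc, hnac⟩ := hnontrans
  have neab : a ≠ b := by rintro rfl; exact hirr a hab
  have nebc : b ≠ c := by rintro rfl; exact hirr b hbc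
  have neac : a ≠ c := by rintro rfl; exact (htour a b neab).mp hab hbc
  have hca : T c a := by
    by_contra h
    exact hnac ((htour a c neac).mpr h)
  have nba : ¬ T b a := (htour a b neab).mp hab
  have ncb : ¬ T c b := (htour b c nebc).mp hbc
  have nac : ¬ T a c := (htour c a neac.symm).mp hca
  obtain ⟨d, ⟨neda, nedb, nedc⟩, cov⟩ :
      ∃ d : Fin 4, (d ≠ a ∧ d ≠ b ∧ d ≠ c) ∧ ∀ v, v = a ∨ v = b ∨ v = c ∨ v = d := by
    have key : ∀ a b c : Fin 4, a ≠ b → b ≠ c → a ≠ c →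
        ∃ d : Fin 4, (d ≠ a ∧ d ≠ b ∧ d ≠ c) ∧ ∀ v, v = a ∨ v = b ∨ v = c ∨ v = d := by decide
    exact key a b c neab nebc neac
  by_cases h1 : T d a <;> by_cases h2 : T d b <;> by_cases h3 : T d c
  · exact helper T a b c d cov hirr nba ncb nac (Ne.symm neab) (Ne.symm neac) (Ne.symm nebc)
      neda nedb nedc 0 1 3 6 (by unfold qr7; decide) (by unfold qr7; decide) (by unfold qr7; decide)
      (Or.inl ⟨(htour d a neda).mp h1, by unfold qr7; decide⟩)
      (Or.inl ⟨(htour d b nedb).mp h2, by unfold qr7; decide⟩)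
      (Or.inl ⟨(htour d c nedc).mp h3, by unfold qr7; decide⟩)
  · exact helper T a b c d cov hirr nba ncb nac (Ne.symm neab) (Ne.symm neac) (Ne.symm nebc)
      neda nedb nedc 0 1 5 6 (by unfold qr7; decide) (by unfold qr7; decide) (by unfold qr7; decide)
      (Or.inl ⟨(htour d a neda).mp h1, by unfold qr7; decide⟩)
      (Or.inl ⟨(htour d b nedb).mp h2, by unfold qr7; decide⟩)
      (Or.inr ⟨h3, by unfold qr7; decide⟩)
  · exact helper T a b c d cov hirr nba ncb nac (Ne.symm neab) (Ne.symm neac) (Ne.symm nebc)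
      neda nedb nedc 0 1 5 3 (by unfold qr7; decide) (by unfold qr7; decide) (by unfold qr7; decide)
      (Or.inl ⟨(htour d a neda).mp h1, by unfold qr7; decide⟩)
      (Or.inr ⟨h2, by unfold qr7; decide⟩)
      (Or.inl ⟨(htour d c nedc).mp h3, by unfold qr7; decide⟩)
  · exact helper T a b c d cov hirr nba ncb nac (Ne.symm neab) (Ne.symm neac) (Ne.symm nebc)
      neda nedb nedc 0 1 3 5 (by unfold qr7; decide) (by unfold qr7; decide) (by unfold qr7; decide)
      (Or.inl ⟨(htour d a neda).mp h1, by unfold qr7; decide⟩)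
      (Or.inr ⟨h2, by unfold qr7; decide⟩)
      (Or.inr ⟨h3, by unfold qr7; decide⟩)
  · exact helper T a b c d cov hirr nba ncb nac (Ne.symm neab) (Ne.symm neac) (Ne.symm nebc)
      neda nedb nedc 0 1 5 4 (by unfold qr7; decide) (by unfold qr7; decide) (by unfold qr7; decide)
      (Or.inr ⟨h1, by unfold qr7; decide⟩)
      (Or.inl ⟨(htour d b nedb).mp h2, by unfold qr7; decide⟩)
      (Or.inl ⟨(htour d c nedc).mp h3, by unfold qr7; decide⟩)
  · exact helper T a b c d cov hirr nba ncb nac (Ne.symm neab) (Ne.symm neac) (Ne.symm nebc)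
      neda nedb nedc 0 1 3 4 (by unfold qr7; decide) (by unfold qr7; decide) (by unfold qr7; decide)
      (Or.inr ⟨h1, by unfold qr7; decide⟩)
      (Or.inl ⟨(htour d b nedb).mp h2, by unfold qr7; decide⟩)
      (Or.inr ⟨h3, by unfold qr7; decide⟩)
  · exact helper T a b c d cov hirr nba ncb nac (Ne.symm neab) (Ne.symm neac) (Ne.symm nebc)
      neda nedb nedc 0 1 3 2 (by unfold qr7; decide) (by unfold qr7; decide) (by unfold qr7; decide)
      (Or.inr ⟨h1, by unfold qr7; decide⟩)
      (Or.inr ⟨h2, by unfold qr7; decide⟩)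
      (Or.inl ⟨(htour d c nedc).mp h3, by unfold qr7; decide⟩)
  · exact helper T a b c d cov hirr nba ncb nac (Ne.symm neab) (Ne.symm neac) (Ne.symm nebc)
      neda nedb nedc 0 1 5 2 (by unfold qr7; decide) (by unfold qr7; decide) (by unfold qr7; decide)
      (Or.inr ⟨h1, by unfold qr7; decide⟩)
      (Or.inr ⟨h2, by unfold qr7; decide⟩)
      (Or.inr ⟨h3, by unfold qr7; decide⟩)
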